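/- Let R = R₁ × ⋯ × R_t be a finite product of commutative rings and let 𝔠 ⊆ R[z]^n be an (n,k) family of convolutional codes over R whose restrictions C_j := π_j(𝔠) each admit a minimal first order representation with parameters (n,k,δ) over R_j, unique up to equivalence. Then 𝔠 admits a minimal first order representation with parameters (n,k,δ) over R, and it is unique up to equivalence. -/

import Mathlib

set_option maxHeartbeats 1000000


open Matrix Polynomial

/-- `(K,L,M)` is a first order representation (with parameters `(n,k,δ)`) of
the code `𝔠 ⊆ S[z]^n`:
`𝔠 = {v(z) | ∃ x(z), (zK+L)x(z) + Mv(z) = 0}`. -/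
def IsFOR {S : Type*} [CommRing S] {n k δ : ℕ}
    (𝔠 : Submodule (Polynomial S) (Fin n → Polynomial S))
    (K L : Matrix (Fin (δ + n - k)) (Fin δ) S)
    (M : Matrix (Fin (δ + n - k)) (Fin n) S) : Prop :=
  ∀ v : Fin n → Polynomial S,
    v ∈ 𝔠 ↔ ∃ x : Fin δ → Polynomial S,
      ((Polynomial.X : Polynomial S) • K.map Polynomial.C + L.map Polynomial.C).mulVec x
        + (M.map Polynomial.C).mulVec v = 0

/-- Minimality conditions for a first order representation `(K,L,M)`:
(1) `K : S^δ → S^{δ+n-k}` is injective with flat cokernel,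
(2) `(K M) : S^{δ+n} → S^{δ+n-k}` is surjective,
(3) `(zK+L M) : S[z]^{δ+n} → S[z]^{δ+n-k}` is surjective. -/
def MinimalFOR {S : Type*} [CommRing S] {n k δ : ℕ}
    (K L : Matrix (Fin (δ + n - k)) (Fin δ) S)
    (M : Matrix (Fin (δ + n - k)) (Fin n) S) : Prop :=
  Function.Injective K.mulVecLin ∧
  Module.Flat S ((Fin (δ + n - k) → S) ⧸ LinearMap.range K.mulVecLin) ∧
  Function.Surjective (Matrix.fromCols K M).mulVecLin ∧
  Function.Surjective (Matrix.fromCols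
      ((Polynomial.X : Polynomial S) • K.map Polynomial.C + L.map Polynomial.C)
      (M.map Polynomial.C)).mulVecLin

/-- Two first order representations are equivalent if they differ by invertible
matrices `T`, `S`: `(K',L',M') = (T K S⁻¹, T L S⁻¹, T M)`. -/
def EquivFOR {S : Type*} [CommRing S] {n k δ : ℕ}
    (K L : Matrix (Fin (δ + n - k)) (Fin δ) S)
    (M : Matrix (Fin (δ + n - k)) (Fin n) S)
    (K' L' : Matrix (Fin (δ + n - k)) (Fin δ) S)
    (M' : Matrix (Fin (δ + n - k)) (Fin n) S) : Prop :=
  ∃ (T : (Matrix (Fin (δ + n - k)) (Fin (δ + n - k)) S)ˣ)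
    (Sm : (Matrix (Fin δ) (Fin δ) S)ˣ),
    K' = (T : Matrix (Fin (δ + n - k)) (Fin (δ + n - k)) S) * K * ((Sm⁻¹ : (Matrix (Fin δ) (Fin δ) S)ˣ) : Matrix (Fin δ) (Fin δ) S) ∧
    L' = (T : Matrix (Fin (δ + n - k)) (Fin (δ + n - k)) S) * L * ((Sm⁻¹ : (Matrix (Fin δ) (Fin δ) S)ˣ) : Matrix (Fin δ) (Fin δ) S) ∧
    M' = (T : Matrix _ _ S) * M

/-- The restriction `C_j = π_j(𝔠)` of a code over a product ring to its `j`-th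
component, as an `R_j[z]`-submodule. -/
noncomputable def restrictCode {t n : ℕ} {R : Fin t → Type*} [∀ j, CommRing (R j)]
    (𝔠 : Submodule (Polynomial (∀ j, R j)) (Fin n → Polynomial (∀ j, R j)))
    (j : Fin t) : Submodule (Polynomial (R j)) (Fin n → Polynomial (R j)) :=
  Submodule.span (Polynomial (R j))
    ((fun v : Fin n → Polynomial (∀ i, R i) =>
      fun l => (v l).map (Pi.evalRingHom R j)) '' (𝔠 : Set _))


/-! ### Auxiliary lemmas -/

section Aux

theorem polyPi_ext' {t : ℕ} {R : Fin t → Type*} [∀ j, CommRing (R j)]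
    {p q : Polynomial (∀ j, R j)}
    (h : ∀ j, p.map (Pi.evalRingHom R j) = q.map (Pi.evalRingHom R j)) :
    p = q := by
  ext m j
  have := congrArg (fun r => Polynomial.coeff r m) (h j)
  simpa [Polynomial.coeff_map] using this

theorem polyPi_lift {t : ℕ} {R : Fin t → Type*} [∀ j, CommRing (R j)]
    (f : ∀ j, Polynomial (R j)) :
    ∃ p : Polynomial (∀ j, R j), ∀ j, p.map (Pi.evalRingHom R j) = f j := by
  classical
  set N := (Finset.univ.sup fun j => (f j).natDegree) + 1 with hN
  refine ⟨∑ m ∈ Finset.range N, Polynomial.monomial m (fun j => (f j).coeff m), ?_⟩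
  intro j
  ext m
  rw [Polynomial.coeff_map]
  have hc : (∑ m' ∈ Finset.range N, Polynomial.monomial m' (fun j => (f j).coeff m')).coeff m
      = if m ∈ Finset.range N then (fun j => (f j).coeff m) else 0 := by
    rw [Polynomial.finset_sum_coeff]
    simp only [Polynomial.coeff_monomial]
    rw [Finset.sum_congr rfl (fun x _ => by
      rw [show ((if x = m then (fun j => (f j).coeff x) else 0) : ∀ j, R j)
        = if m = x then (fun j => (f j).coeff x) else 0 from by simp [eq_comm]])]
    exact Finset.sum_ite_eq (Finset.range N) m (fun m' => (fun j => (f j).coeff m'))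
  rw [hc]
  by_cases hm : m ∈ Finset.range N
  · simp [hm]
  · simp only [hm, if_false]
    have : (f j).natDegree < m := by
      have h1 : (f j).natDegree ≤ Finset.univ.sup fun j => (f j).natDegree :=
        Finset.le_sup (f := fun j => (f j).natDegree) (Finset.mem_univ j)
      have h2 : N ≤ m := by simpa [Finset.mem_range, not_lt] using hm
      omega
    rw [Polynomial.coeff_eq_zero_of_natDegree_lt this]
    rfl

theorem polyPi_liftVec {t : ℕ} {R : Fin t → Type*} [∀ j, CommRing (R j)]
    {α : Type*} (f : ∀ j, α → Polynomial (R j)) :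
    ∃ v : α → Polynomial (∀ j, R j), ∀ j l, (v l).map (Pi.evalRingHom R j) = f j l := by
  have h := fun l => polyPi_lift (fun j => f j l)
  choose v hv using h
  exact ⟨v, fun j l => hv l j⟩

theorem polyPi_lift_single {t : ℕ} {R : Fin t → Type*} [∀ j, CommRing (R j)]
    (j : Fin t) (p : Polynomial (R j)) :
    ∃ q : Polynomial (∀ i, R i), q.map (Pi.evalRingHom R j) = p ∧
      ∀ i, i ≠ j → q.map (Pi.evalRingHom R i) = 0 := by
  classical
  obtain ⟨q, hq⟩ := polyPi_lift (Function.update (fun i => (0 : Polynomial (R i))) j p)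
  exact ⟨q, by simpa using hq j, fun i hi => by simpa [Function.update_of_ne hi] using hq i⟩

theorem polyPi_liftVec_single {t : ℕ} {R : Fin t → Type*} [∀ j, CommRing (R j)]
    {α : Type*} (j : Fin t) (w : α → Polynomial (R j)) :
    ∃ v : α → Polynomial (∀ i, R i), (∀ l, (v l).map (Pi.evalRingHom R j) = w l) ∧
      ∀ i, i ≠ j → ∀ l, (v l).map (Pi.evalRingHom R i) = 0 := by
  have h := fun l => polyPi_lift_single j (w l)
  choose v hv1 hv2 using h
  exact ⟨v, hv1, fun i hi l => hv2 l i hi⟩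

section Hom
variable {S S' : Type*} [CommRing S] [CommRing S'] (g : S →+* S')

theorem polyMat_map {ρ σ : Type*} (K L : Matrix ρ σ S) :
    ((Polynomial.X : Polynomial S) • K.map Polynomial.C + L.map Polynomial.C).map
        (Polynomial.map g)
      = (Polynomial.X : Polynomial S') • (K.map g).map Polynomial.C
          + (L.map g).map Polynomial.C := by
  ext i l
  simp [Matrix.map_apply, Matrix.add_apply, Matrix.smul_apply, smul_eq_mul,
    Polynomial.map_add, Polynomial.map_mul]

theorem matC_map {ρ σ : Type*} (M : Matrix ρ σ S) :
    (M.map Polynomial.C).map (Polynomial.map g) = (M.map g).map Polynomial.C := by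
  ext i l; simp [Matrix.map_apply]

theorem fromColumns_map' {ρ σ σ' α β : Type*} (A : Matrix ρ σ α) (B : Matrix ρ σ' α)
    (f : α → β) :
    (Matrix.fromCols A B).map f = Matrix.fromCols (A.map f) (B.map f) := by
  ext i c; cases c <;> simp [Matrix.fromCols]

theorem FOR_expr_map {ρ σ ν : Type*} [Fintype σ] [Fintype ν]
    (K L : Matrix ρ σ S) (M : Matrix ρ ν S)
    (x : σ → Polynomial S) (v : ν → Polynomial S) (i : ρ) :
    ((((Polynomial.X : Polynomial S) • K.map Polynomial.C + L.map Polynomial.C).mulVec x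
        + (M.map Polynomial.C).mulVec v) i).map g
    = (((Polynomial.X : Polynomial S') • (K.map g).map Polynomial.C
          + (L.map g).map Polynomial.C).mulVec (fun l => (x l).map g)
        + ((M.map g).map Polynomial.C).mulVec (fun l => (v l).map g)) i := by
  have e1 := RingHom.map_mulVec (Polynomial.mapRingHom g)
    ((Polynomial.X : Polynomial S) • K.map Polynomial.C + L.map Polynomial.C) x i
  have e2 := RingHom.map_mulVec (Polynomial.mapRingHom g) (M.map Polynomial.C) v i
  simp only [Polynomial.coe_mapRingHom] at e1 e2
  simp only [Pi.add_apply, Polynomial.map_add, e1, e2, polyMat_map, matC_map,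
    Function.comp_def]

end Hom

section Mem
variable {t n : ℕ} {R : Fin t → Type*} [∀ j, CommRing (R j)]
  (𝔠 : Submodule (Polynomial (∀ j, R j)) (Fin n → Polynomial (∀ j, R j)))

theorem mem_restrictCode_iff {j : Fin t} {w : Fin n → Polynomial (R j)} :
    w ∈ restrictCode 𝔠 j ↔ ∃ v ∈ 𝔠, (fun l => (v l).map (Pi.evalRingHom R j)) = w := by
  constructor
  · intro hw
    induction hw using Submodule.span_induction with
    | mem x hx =>
      obtain ⟨v, hv, rfl⟩ := hx
      exact ⟨v, hv, rfl⟩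
    | zero => exact ⟨0, 𝔠.zero_mem, by funext l; simp⟩
    | add x y _ _ hx hy =>
      obtain ⟨v, hv, rfl⟩ := hx
      obtain ⟨u, hu, rfl⟩ := hy
      exact ⟨v + u, 𝔠.add_mem hv hu, by funext l; simp [Polynomial.map_add]⟩
    | smul p x _ hx =>
      obtain ⟨v, hv, rfl⟩ := hx
      obtain ⟨q, hq1, _⟩ := polyPi_lift_single j p
      refine ⟨q • v, 𝔠.smul_mem q hv, ?_⟩
      funext l
      simp [Pi.smul_apply, smul_eq_mul, Polynomial.map_mul, hq1]
  · rintro ⟨v, hv, rfl⟩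
    exact Submodule.subset_span ⟨v, hv, rfl⟩

theorem mem_code_iff_components {v : Fin n → Polynomial (∀ j, R j)} :
    v ∈ 𝔠 ↔ ∀ j, (fun l => (v l).map (Pi.evalRingHom R j)) ∈ restrictCode 𝔠 j := by
  classical
  constructor
  · intro hv j
    exact Submodule.subset_span ⟨v, hv, rfl⟩
  · intro h
    have h' : ∀ j, ∃ w ∈ 𝔠, ∀ l,
        (w l).map (Pi.evalRingHom R j) = (v l).map (Pi.evalRingHom R j) := by
      intro j
      obtain ⟨w, hw, hww⟩ := (mem_restrictCode_iff 𝔠).mp (h j)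
      exact ⟨w, hw, fun l => congrFun hww l⟩
    choose w hw hww using h'
    have hv : v = ∑ j, (Polynomial.C (Pi.single j (1 : R j)) : Polynomial (∀ i, R i)) • w j := by
      funext l
      apply polyPi_ext'
      intro i
      have : ((∑ j, (Polynomial.C (Pi.single j (1 : R j)) : Polynomial (∀ i', R i')) • w j) l)
          = ∑ j, Polynomial.C (Pi.single j (1 : R j)) * w j l := by
        simp [Finset.sum_apply, Pi.smul_apply, smul_eq_mul]
      rw [this, Polynomial.map_sum]
      have : ∀ j, (Polynomial.C (Pi.single j (1 : R j)) * w j l).map (Pi.evalRingHom R i)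
          = (if j = i then (1 : Polynomial (R i)) else 0) * (w j l).map (Pi.evalRingHom R i) := by
        intro j
        rw [Polynomial.map_mul, Polynomial.map_C]
        congr 1
        by_cases hji : j = i
        · subst hji; simp
        · rw [if_neg hji]
          have hz : (Pi.evalRingHom R i) (Pi.single j (1 : R j)) = 0 :=
            Pi.single_eq_of_ne (Ne.symm hji) 1
          rw [hz, map_zero]
      rw [Finset.sum_congr rfl (fun j _ => this j)]
      rw [Finset.sum_eq_single i]
      · simp [hww i l]
      · intro b _ hb; simp [hb]
      · intro hi; exact absurd (Finset.mem_univ i) hi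
    rw [hv]
    exact Submodule.sum_mem _ (fun j _ => 𝔠.smul_mem _ (hw j))

end Mem

section IsFORTransfer
variable {t n : ℕ} {R : Fin t → Type*} [∀ j, CommRing (R j)]
  (𝔠 : Submodule (Polynomial (∀ j, R j)) (Fin n → Polynomial (∀ j, R j)))
  {k δ : ℕ}
  (K L : Matrix (Fin (δ + n - k)) (Fin δ) (∀ j, R j))
  (M : Matrix (Fin (δ + n - k)) (Fin n) (∀ j, R j))

theorem IsFOR_down (h : IsFOR 𝔠 K L M) (j : Fin t) :
    IsFOR (restrictCode 𝔠 j) (K.map (Pi.evalRingHom R j)) (L.map (Pi.evalRingHom R j))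
      (M.map (Pi.evalRingHom R j)) := by
  intro w
  constructor
  · intro hw
    obtain ⟨v, hv, hvw⟩ := (mem_restrictCode_iff 𝔠).mp hw
    obtain ⟨x, hx⟩ := (h v).mp hv
    refine ⟨fun l => (x l).map (Pi.evalRingHom R j), ?_⟩
    funext i
    have := congrArg (fun p => Polynomial.map (Pi.evalRingHom R j) p) (congrFun hx i)
    simp only [Pi.zero_apply, Polynomial.map_zero] at this
    rw [FOR_expr_map] at this
    rw [← hvw]
    exact this
  · rintro ⟨xj, hxj⟩
    obtain ⟨x, hx1, hx2⟩ := polyPi_liftVec_single (α := Fin δ) j xj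
    obtain ⟨v, hv1, hv2⟩ := polyPi_liftVec_single (α := Fin n) j w
    have hv : v ∈ 𝔠 := by
      refine (h v).mpr ⟨x, ?_⟩
      funext i
      apply polyPi_ext'
      intro i'
      rw [Pi.zero_apply, Polynomial.map_zero, FOR_expr_map]
      by_cases hij : i' = j
      · subst hij
        have e1 : (fun l => (x l).map (Pi.evalRingHom R i')) = xj := funext hx1
        have e2 : (fun l => (v l).map (Pi.evalRingHom R i')) = w := funext hv1
        rw [e1, e2]
        exact congrFun hxj i
      · have e1 : (fun l => (x l).map (Pi.evalRingHom R i')) = 0 := funext (hx2 i' hij)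
        have e2 : (fun l => (v l).map (Pi.evalRingHom R i')) = 0 := funext (hv2 i' hij)
        rw [e1, e2, Matrix.mulVec_zero, Matrix.mulVec_zero, add_zero, Pi.zero_apply]
    have : (fun l => (v l).map (Pi.evalRingHom R j)) = w := funext hv1
    rw [← this]
    exact Submodule.subset_span ⟨v, hv, rfl⟩

theorem IsFOR_up
    (h : ∀ j, IsFOR (restrictCode 𝔠 j) (K.map (Pi.evalRingHom R j))
      (L.map (Pi.evalRingHom R j)) (M.map (Pi.evalRingHom R j))) :
    IsFOR 𝔠 K L M := by
  intro v
  rw [mem_code_iff_components 𝔠]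
  constructor
  · intro hc
    have h' : ∀ j, ∃ xj : Fin δ → Polynomial (R j),
        ((Polynomial.X : Polynomial (R j)) • (K.map (Pi.evalRingHom R j)).map Polynomial.C
            + (L.map (Pi.evalRingHom R j)).map Polynomial.C).mulVec xj
          + ((M.map (Pi.evalRingHom R j)).map Polynomial.C).mulVec
              (fun l => (v l).map (Pi.evalRingHom R j)) = 0 :=
      fun j => (h j _).mp (hc j)
    choose xj hxj using h'
    obtain ⟨x, hx⟩ := polyPi_liftVec xj
    refine ⟨x, ?_⟩
    funext i
    apply polyPi_ext'
    intro j
    rw [Pi.zero_apply, Polynomial.map_zero, FOR_expr_map]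
    have e1 : (fun l => (x l).map (Pi.evalRingHom R j)) = xj j := funext (hx j)
    rw [e1]
    exact congrFun (hxj j) i
  · rintro ⟨x, hx⟩ j
    refine (h j _).mpr ⟨fun l => (x l).map (Pi.evalRingHom R j), ?_⟩
    funext i
    have := congrArg (fun p => Polynomial.map (Pi.evalRingHom R j) p) (congrFun hx i)
    simp only [Pi.zero_apply, Polynomial.map_zero] at this
    rw [FOR_expr_map] at this
    exact this

end IsFORTransfer

section MinTransfer
variable {t : ℕ} {R : Fin t → Type*} [∀ j, CommRing (R j)]

theorem inj_down {ρ σ : Type*} [Fintype σ] (A : Matrix ρ σ (∀ j, R j))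
    (h : Function.Injective A.mulVecLin) (j : Fin t) :
    Function.Injective (A.map (Pi.evalRingHom R j)).mulVecLin := by
  classical
  rw [← LinearMap.ker_eq_bot] at h ⊢
  rw [LinearMap.ker_eq_bot'] at h ⊢
  intro u hu
  set uh : σ → ∀ i, R i := fun l => Pi.single j (u l) with huh
  have h1 : A.mulVecLin uh = 0 := by
    funext r
    funext i
    have := RingHom.map_mulVec (Pi.evalRingHom R i) A uh r
    rw [Matrix.mulVecLin_apply]
    show (Pi.evalRingHom R i) ((A.mulVec uh) r) = 0
    rw [this]
    by_cases hij : i = j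
    · subst hij
      have : (⇑(Pi.evalRingHom R i) ∘ uh) = u := by
        funext l; exact Pi.single_eq_same _ _
      rw [this]
      have := congrFun hu r
      rw [Matrix.mulVecLin_apply] at this
      exact this
    · have : (⇑(Pi.evalRingHom R i) ∘ uh) = 0 := by
        funext l; exact Pi.single_eq_of_ne hij _
      rw [this, Matrix.mulVec_zero, Pi.zero_apply]
  have := h uh h1
  funext l
  have := congrFun this l
  have h2 : uh l j = 0 := by rw [this]; rfl
  rw [huh] at h2
  simpa using h2

theorem inj_up {ρ σ : Type*} [Fintype σ] (A : Matrix ρ σ (∀ j, R j))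
    (h : ∀ j, Function.Injective (A.map (Pi.evalRingHom R j)).mulVecLin) :
    Function.Injective A.mulVecLin := by
  rw [← LinearMap.ker_eq_bot, LinearMap.ker_eq_bot']
  intro u hu
  funext l
  funext j
  have h1 : (A.map (Pi.evalRingHom R j)).mulVecLin (fun l => u l j) = 0 := by
    funext r
    rw [Matrix.mulVecLin_apply]
    have := RingHom.map_mulVec (Pi.evalRingHom R j) A u r
    have h0 : (Pi.evalRingHom R j) ((A.mulVec u) r) = 0 := by
      have := congrFun hu r
      rw [Matrix.mulVecLin_apply] at this
      rw [this]; rfl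
    rw [this] at h0
    exact h0
  have := LinearMap.ker_eq_bot'.mp
    ((LinearMap.ker_eq_bot (f := (A.map (Pi.evalRingHom R j)).mulVecLin)).mpr (h j)) _ h1
  exact congrFun this l

theorem surj_down {ρ σ : Type*} [Fintype σ] (A : Matrix ρ σ (∀ j, R j))
    (h : Function.Surjective A.mulVecLin) (j : Fin t) :
    Function.Surjective (A.map (Pi.evalRingHom R j)).mulVecLin := by
  classical
  intro w
  obtain ⟨u, hu⟩ := h (fun r => Pi.single j (w r))
  refine ⟨fun c => u c j, ?_⟩
  funext r
  rw [Matrix.mulVecLin_apply]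
  have := RingHom.map_mulVec (Pi.evalRingHom R j) A u r
  have h0 : (Pi.evalRingHom R j) ((A.mulVec u) r) = w r := by
    have := congrFun hu r
    rw [Matrix.mulVecLin_apply] at this
    rw [this]
    exact Pi.single_eq_same _ _
  rw [this] at h0
  exact h0

theorem surj_up {ρ σ : Type*} [Fintype σ] (A : Matrix ρ σ (∀ j, R j))
    (h : ∀ j, Function.Surjective (A.map (Pi.evalRingHom R j)).mulVecLin) :
    Function.Surjective A.mulVecLin := by
  intro w
  have h' : ∀ j, ∃ uj : σ → R j, (A.map (Pi.evalRingHom R j)).mulVec uj = fun r => w r j :=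
    fun j => (h j (fun r => w r j)).imp (fun uj huj => by rw [← huj]; rfl)
  choose uj huj using h'
  refine ⟨fun c j => uj j c, ?_⟩
  funext r
  funext j
  rw [Matrix.mulVecLin_apply]
  show (Pi.evalRingHom R j) ((A.mulVec fun c j => uj j c) r) = w r j
  rw [RingHom.map_mulVec]
  exact congrFun (huj j) r

theorem psurj_down {ρ σ : Type*} [Fintype σ] (A : Matrix ρ σ (Polynomial (∀ j, R j)))
    (h : Function.Surjective A.mulVecLin) (j : Fin t) :
    Function.Surjective (A.map (Polynomial.map (Pi.evalRingHom R j))).mulVecLin := by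
  intro w
  obtain ⟨wh, hw1, -⟩ := polyPi_liftVec_single (α := ρ) j w
  obtain ⟨u, hu⟩ := h wh
  refine ⟨fun c => (u c).map (Pi.evalRingHom R j), ?_⟩
  funext r
  rw [Matrix.mulVecLin_apply]
  have := RingHom.map_mulVec (Polynomial.mapRingHom (Pi.evalRingHom R j)) A u r
  simp only [Polynomial.coe_mapRingHom] at this
  have h0 : ((A.mulVec u) r).map (Pi.evalRingHom R j) = w r := by
    have := congrFun hu r
    rw [Matrix.mulVecLin_apply] at this
    rw [this]
    exact hw1 r
  rw [this] at h0
  rw [← h0]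
  rfl

theorem psurj_up {ρ σ : Type*} [Fintype σ] (A : Matrix ρ σ (Polynomial (∀ j, R j)))
    (h : ∀ j, Function.Surjective (A.map (Polynomial.map (Pi.evalRingHom R j))).mulVecLin) :
    Function.Surjective A.mulVecLin := by
  intro w
  have h' : ∀ j, ∃ uj : σ → Polynomial (R j),
      (A.map (Polynomial.map (Pi.evalRingHom R j))).mulVec uj
        = fun r => (w r).map (Pi.evalRingHom R j) :=
    fun j => (h j (fun r => (w r).map (Pi.evalRingHom R j))).imp (fun uj huj => by
      rw [← huj]; rfl)
  choose uj huj using h'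
  obtain ⟨u, hu⟩ := polyPi_liftVec uj
  refine ⟨u, ?_⟩
  funext r
  apply polyPi_ext'
  intro j
  have := RingHom.map_mulVec (Polynomial.mapRingHom (Pi.evalRingHom R j)) A u r
  simp only [Polynomial.coe_mapRingHom] at this
  rw [Matrix.mulVecLin_apply, this]
  have e1 : (Polynomial.map (Pi.evalRingHom R j) ∘ u) = uj j := funext fun c => hu j c
  rw [e1]
  exact congrFun (huj j) r

end MinTransfer

section FlatSurj
open TensorProduct

theorem flat_of_surj {A : Type u} {B : Type v} [CommRing A] [CommRing B]
    (g : A →+* B) (hg : Function.Surjective g) (N : Type w) [AddCommGroup N]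
    [Module B N] [Module A N] (hsmul : ∀ (a : A) (x : N), a • x = g a • x)
    (hflat : Module.Flat A N) : Module.Flat B N := by
  rw [Module.Flat.iff_lTensor_preserves_injective_linearMap]
  intro P Q _ _ _ _ f hf
  letI : Module A P := Module.compHom P g
  letI : Module A Q := Module.compHom Q g
  have hP : ∀ (a : A) (p : P), a • p = g a • p := fun _ _ => rfl
  have hQ : ∀ (a : A) (q : Q), a • q = g a • q := fun _ _ => rfl
  haveI c1 : TensorProduct.CompatibleSMul A B N P := by
    constructor
    intro b m n
    obtain ⟨a, rfl⟩ := hg b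
    rw [← hsmul, ← hP]
    exact TensorProduct.smul_tmul a m n
  haveI c2 : TensorProduct.CompatibleSMul B A N P := by
    constructor
    intro a m n
    rw [hsmul, hP]
    exact TensorProduct.smul_tmul (g a) m n
  haveI c3 : TensorProduct.CompatibleSMul A B N Q := by
    constructor
    intro b m n
    obtain ⟨a, rfl⟩ := hg b
    rw [← hsmul, ← hQ]
    exact TensorProduct.smul_tmul a m n
  haveI c4 : TensorProduct.CompatibleSMul B A N Q := by
    constructor
    intro a m n
    rw [hsmul, hQ]
    exact TensorProduct.smul_tmul (g a) m n
  haveI : SMulCommClass A B N :=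
    ⟨fun a b x => by rw [hsmul, hsmul, smul_smul, smul_smul, mul_comm]⟩
  let eP : N ⊗[B] P ≃ₗ[B] N ⊗[A] P := TensorProduct.equivOfCompatibleSMul A B B N P
  let eQ : N ⊗[B] Q ≃ₗ[B] N ⊗[A] Q := TensorProduct.equivOfCompatibleSMul A B B N Q
  let f' : P →ₗ[A] Q :=
    { toFun := f
      map_add' := f.map_add
      map_smul' := fun a p => by
        show f (g a • p) = g a • f p
        exact f.map_smul (g a) p }
  have hf' : Function.Injective f' := fun x y hxy => hf hxy
  have key : ∀ x : N ⊗[B] P, eQ (f.lTensor N x) = f'.lTensor N (eP x) := by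
    intro x
    induction x using TensorProduct.induction_on with
    | zero => rw [map_zero, map_zero, map_zero, map_zero]
    | tmul m p =>
      have h1 : eP (m ⊗ₜ[B] p) = m ⊗ₜ[A] p := rfl
      have h2 : eQ (m ⊗ₜ[B] (f p)) = m ⊗ₜ[A] (f p) := rfl
      rw [LinearMap.lTensor_tmul, h2, h1, LinearMap.lTensor_tmul]
      rfl
    | add x y hx hy => rw [map_add, map_add, hx, hy, map_add, map_add]
  intro x y hxy
  apply eP.injective
  apply Module.Flat.lTensor_preserves_injective_linearMap f' hf'
  rw [← key, ← key, hxy]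

end FlatSurj

section FlatCoker
variable {t : ℕ} {R : Fin t → Type u} [∀ j, CommRing (R j)]

theorem flat_coker_iff {a b : ℕ} (A : Matrix (Fin a) (Fin b) (∀ j, R j)) :
    Module.Flat (∀ j, R j) ((Fin a → ∀ j, R j) ⧸ LinearMap.range A.mulVecLin) ↔
    ∀ j, Module.Flat (R j)
      ((Fin a → R j) ⧸ LinearMap.range (A.map (Pi.evalRingHom R j)).mulVecLin) := by
  classical
  letI instN : ∀ j, Module (∀ i, R i)
      ((Fin a → R j) ⧸ LinearMap.range (A.map (Pi.evalRingHom R j)).mulVecLin) :=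
    fun j => Module.compHom _ (Pi.evalRingHom R j)
  -- the linear map φ
  let φ : (Fin a → ∀ j, R j) →ₗ[∀ j, R j]
      (∀ j, (Fin a → R j) ⧸ LinearMap.range (A.map (Pi.evalRingHom R j)).mulVecLin) :=
    { toFun := fun v j => Submodule.Quotient.mk (fun r => v r j)
      map_add' := fun v w => by
        funext j
        show (Submodule.Quotient.mk (fun r => (v + w) r j) : (Fin a → R j) ⧸
            LinearMap.range (A.map (Pi.evalRingHom R j)).mulVecLin) =
          Submodule.Quotient.mk (fun r => v r j) + Submodule.Quotient.mk (fun r => w r j)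
        rw [← Submodule.Quotient.mk_add]
        rfl
      map_smul' := fun r v => by
        funext j
        show (Submodule.Quotient.mk (fun r' => (r • v) r' j) : (Fin a → R j) ⧸
            LinearMap.range (A.map (Pi.evalRingHom R j)).mulVecLin) =
          (Pi.evalRingHom R j) r • (Submodule.Quotient.mk (fun r' => v r' j) : (Fin a → R j) ⧸
            LinearMap.range (A.map (Pi.evalRingHom R j)).mulVecLin)
        rw [← Submodule.Quotient.mk_smul]
        rfl }
  have hker : LinearMap.ker φ = LinearMap.range A.mulVecLin := by
    ext v
    rw [LinearMap.mem_ker, LinearMap.mem_range]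
    constructor
    · intro hv
      have h' : ∀ j, ∃ uj : Fin b → R j,
          (A.map (Pi.evalRingHom R j)).mulVec uj = fun r => v r j := by
        intro j
        have := congrFun hv j
        have h0 : Submodule.Quotient.mk (p := LinearMap.range (A.map (Pi.evalRingHom R j)).mulVecLin)
            (fun r => v r j) = 0 := this
        rw [Submodule.Quotient.mk_eq_zero, LinearMap.mem_range] at h0
        obtain ⟨uj, huj⟩ := h0
        exact ⟨uj, huj⟩
      choose uj huj using h'
      refine ⟨fun c j => uj j c, ?_⟩
      funext r
      funext j
      rw [Matrix.mulVecLin_apply]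
      show (Pi.evalRingHom R j) ((A.mulVec fun c j => uj j c) r) = v r j
      rw [RingHom.map_mulVec]
      exact congrFun (huj j) r
    · rintro ⟨u, rfl⟩
      funext j
      show Submodule.Quotient.mk (fun r => (A.mulVecLin u) r j) = 0
      rw [Submodule.Quotient.mk_eq_zero, LinearMap.mem_range]
      refine ⟨fun c => u c j, ?_⟩
      funext r
      rw [Matrix.mulVecLin_apply]
      exact (RingHom.map_mulVec (Pi.evalRingHom R j) A u r).symm
  have hsurj : Function.Surjective φ := by
    intro x
    have h' : ∀ j, ∃ w : Fin a → R j, Submodule.Quotient.mk w = x j :=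
      fun j => Submodule.Quotient.mk_surjective _ (x j)
    choose w hw using h'
    exact ⟨fun r j => w j r, funext fun j => hw j⟩
  let e : ((Fin a → ∀ j, R j) ⧸ LinearMap.range A.mulVecLin) ≃ₗ[∀ j, R j]
      (∀ j, (Fin a → R j) ⧸ LinearMap.range (A.map (Pi.evalRingHom R j)).mulVecLin) :=
    (Submodule.quotEquivOfEq _ _ hker.symm).trans (φ.quotKerEquivOfSurjective hsurj)
  constructor
  · intro hflat j
    haveI hpi : Module.Flat (∀ i, R i)
        (∀ j, (Fin a → R j) ⧸ LinearMap.range (A.map (Pi.evalRingHom R j)).mulVecLin) :=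
      Module.Flat.of_linearEquiv e.symm
    -- retract to the j-th component
    let ij := LinearMap.single (∀ i, R i)
      (fun i => (Fin a → R i) ⧸ LinearMap.range (A.map (Pi.evalRingHom R i)).mulVecLin) j
    let pj := LinearMap.proj (R := ∀ i, R i)
      (φ := fun i => (Fin a → R i) ⧸ LinearMap.range (A.map (Pi.evalRingHom R i)).mulVecLin) j
    haveI : Module.Flat (∀ i, R i)
        ((Fin a → R j) ⧸ LinearMap.range (A.map (Pi.evalRingHom R j)).mulVecLin) :=
      Module.Flat.of_retract (f := hpi) ij pj (LinearMap.ext fun x => by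
        show Pi.single (M := fun i => (Fin a → R i) ⧸ LinearMap.range
          (A.map (Pi.evalRingHom R i)).mulVecLin) j x j = x
        rw [Pi.single_eq_same])
    exact flat_of_surj (Pi.evalRingHom R j)
      (fun y => ⟨Pi.single j y, Pi.single_eq_same _ _⟩) _ (fun r x => rfl) this
  · intro hj
    haveI hNj : ∀ j, Module.Flat (∀ i, R i)
        ((Fin a → R j) ⧸ LinearMap.range (A.map (Pi.evalRingHom R j)).mulVecLin) := by
      intro j
      letI : Algebra (∀ i, R i) (R j) := (Pi.evalRingHom R j).toAlgebra
      haveI htower : IsScalarTower (∀ i, R i) (R j)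
          ((Fin a → R j) ⧸ LinearMap.range (A.map (Pi.evalRingHom R j)).mulVecLin) := by
        constructor
        intro r s x
        show (r • s) • x = (Pi.evalRingHom R j) r • (s • x)
        rw [Algebra.smul_def, RingHom.algebraMap_toAlgebra, mul_smul]
      haveI hRj : Module.Flat (∀ i, R i) (R j) := by
        refine Module.Flat.of_retract
          { toFun := fun x => Pi.single j x
            map_add' := fun x y => by
              funext i
              by_cases hij : i = j
              · subst hij
                show Pi.single i (x + y) i = Pi.single i x i + Pi.single i y i
                rw [Pi.single_eq_same, Pi.single_eq_same, Pi.single_eq_same]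
              · show Pi.single j (x + y) i = Pi.single j x i + Pi.single j y i
                rw [Pi.single_eq_of_ne hij, Pi.single_eq_of_ne hij, Pi.single_eq_of_ne hij,
                  add_zero]
            map_smul' := fun r x => by
              funext i
              by_cases hij : i = j
              · subst hij
                show Pi.single i ((Pi.evalRingHom R i) r • x) i = r i * (Pi.single i x) i
                rw [Pi.single_eq_same, Pi.single_eq_same]
                rfl
              · show Pi.single j ((Pi.evalRingHom R j) r • x) i = r i * (Pi.single j x) i
                rw [Pi.single_eq_of_ne hij, Pi.single_eq_of_ne hij, mul_zero] }
          { toFun := fun v => v j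
            map_add' := fun x y => rfl
            map_smul' := fun r v => by
              show (r • v) j = (Pi.evalRingHom R j) r • v j
              rfl }
          ?_
        ext x
        show Pi.single j x j = x
        rw [Pi.single_eq_same]
      exact Module.Flat.trans (∀ i, R i) (R j) _
    haveI : Module.Flat (∀ i, R i)
        (∀ j, (Fin a → R j) ⧸ LinearMap.range (A.map (Pi.evalRingHom R j)).mulVecLin) := by
      haveI : Module.Flat (∀ i, R i)
          (DirectSum (Fin t) fun j => (Fin a → R j) ⧸ LinearMap.range (A.map (Pi.evalRingHom R j)).mulVecLin) :=
        Module.Flat.directSum (R := ∀ i, R i) (ι := Fin t) (M := fun j => (Fin a → R j) ⧸ LinearMap.range (A.map (Pi.evalRingHom R j)).mulVecLin)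
      exact Module.Flat.of_linearEquiv
        (DirectSum.linearEquivFunOnFintype (∀ i, R i) (Fin t)
          (fun j => (Fin a → R j) ⧸ LinearMap.range (A.map (Pi.evalRingHom R j)).mulVecLin)).symm
    exact Module.Flat.of_linearEquiv e

end FlatCoker

section Equiv
variable {t : ℕ} {R : Fin t → Type*} [∀ j, CommRing (R j)]

theorem mat_pi_ext {a b : ℕ} {A B : Matrix (Fin a) (Fin b) (∀ j, R j)}
    (h : ∀ j, A.map (Pi.evalRingHom R j) = B.map (Pi.evalRingHom R j)) : A = B := by
  ext r c j
  exact congrFun (congrFun (h j) r) c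

theorem mat_map_mul {a b c : ℕ} (A : Matrix (Fin a) (Fin b) (∀ j, R j))
    (B : Matrix (Fin b) (Fin c) (∀ j, R j)) (j : Fin t) :
    (A * B).map (Pi.evalRingHom R j) = A.map (Pi.evalRingHom R j) * B.map (Pi.evalRingHom R j) :=
  Matrix.map_mul

theorem mat_map_one {a : ℕ} (j : Fin t) :
    (1 : Matrix (Fin a) (Fin a) (∀ j, R j)).map (Pi.evalRingHom R j) = 1 :=
  Matrix.map_one _ (map_zero _) (map_one _)

theorem EquivFOR_up {n k δ : ℕ}
    (K L K' L' : Matrix (Fin (δ + n - k)) (Fin δ) (∀ j, R j))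
    (M M' : Matrix (Fin (δ + n - k)) (Fin n) (∀ j, R j))
    (h : ∀ j, EquivFOR (n := n) (k := k)
      (K.map (Pi.evalRingHom R j)) (L.map (Pi.evalRingHom R j)) (M.map (Pi.evalRingHom R j))
      (K'.map (Pi.evalRingHom R j)) (L'.map (Pi.evalRingHom R j)) (M'.map (Pi.evalRingHom R j))) :
    EquivFOR K L M K' L' M' := by
  choose Tu Su hK hL hM using h
  set Tmat : Matrix (Fin (δ + n - k)) (Fin (δ + n - k)) (∀ j, R j) :=
    Matrix.of fun r c j => (Tu j).val r c with hTmat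
  set Tinv : Matrix (Fin (δ + n - k)) (Fin (δ + n - k)) (∀ j, R j) :=
    Matrix.of fun r c j => (Tu j).inv r c with hTinv
  set Smat : Matrix (Fin δ) (Fin δ) (∀ j, R j) :=
    Matrix.of fun r c j => (Su j).val r c with hSmat
  set Sinv : Matrix (Fin δ) (Fin δ) (∀ j, R j) :=
    Matrix.of fun r c j => (Su j).inv r c with hSinv
  have hTval : ∀ j, Tmat.map (Pi.evalRingHom R j) = (Tu j).val := fun j => by ext r c; rfl
  have hTiv : ∀ j, Tinv.map (Pi.evalRingHom R j) = (Tu j).inv := fun j => by ext r c; rfl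
  have hSval : ∀ j, Smat.map (Pi.evalRingHom R j) = (Su j).val := fun j => by ext r c; rfl
  have hSiv : ∀ j, Sinv.map (Pi.evalRingHom R j) = (Su j).inv := fun j => by ext r c; rfl
  have hT1 : Tmat * Tinv = 1 := by
    apply mat_pi_ext; intro j
    rw [mat_map_mul, mat_map_one, hTval, hTiv, (Tu j).val_inv]
  have hT2 : Tinv * Tmat = 1 := by
    apply mat_pi_ext; intro j
    rw [mat_map_mul, mat_map_one, hTval, hTiv, (Tu j).inv_val]
  have hS1 : Smat * Sinv = 1 := by
    apply mat_pi_ext; intro j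
    rw [mat_map_mul, mat_map_one, hSval, hSiv, (Su j).val_inv]
  have hS2 : Sinv * Smat = 1 := by
    apply mat_pi_ext; intro j
    rw [mat_map_mul, mat_map_one, hSval, hSiv, (Su j).inv_val]
  refine ⟨⟨Tmat, Tinv, hT1, hT2⟩, ⟨Smat, Sinv, hS1, hS2⟩, ?_, ?_, ?_⟩
  · apply mat_pi_ext; intro j
    rw [show ((⟨Smat, Sinv, hS1, hS2⟩ : (Matrix (Fin δ) (Fin δ) (∀ j, R j))ˣ)⁻¹ :
      (Matrix (Fin δ) (Fin δ) (∀ j, R j))ˣ).val = Sinv from rfl]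
    rw [mat_map_mul, mat_map_mul, hTval, hSiv, hK j]
    rfl
  · apply mat_pi_ext; intro j
    rw [show ((⟨Smat, Sinv, hS1, hS2⟩ : (Matrix (Fin δ) (Fin δ) (∀ j, R j))ˣ)⁻¹ :
      (Matrix (Fin δ) (Fin δ) (∀ j, R j))ˣ).val = Sinv from rfl]
    rw [mat_map_mul, mat_map_mul, hTval, hSiv, hL j]
    rfl
  · apply mat_pi_ext; intro j
    exact (hM j).trans (by rw [← hTval]; exact (mat_map_mul Tmat M j).symm)

end Equiv

end Aux

/-- A finite product of rings with representations is a ring with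
representations: if each restriction `C_j` of an `(n,k)` family of
convolutional codes `𝔠` over `R = R₁ × ⋯ × R_t` admits a minimal first order
representation with parameters `(n,k,δ)`, unique up to equivalence, then `𝔠`
admits a minimal first order representation with parameters `(n,k,δ)`, unique
up to equivalence. -/
theorem exists_unique_minimal_FOR_of_components {t n k δ : ℕ} (hk : k ≤ n)
    (R : Fin t → Type*) [∀ j, CommRing (R j)]
    (𝔠 : Submodule (Polynomial (∀ j, R j)) (Fin n → Polynomial (∀ j, R j)))
    (hfree : Nonempty (Module.Basis (Fin k) (Polynomial (∀ j, R j)) 𝔠))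
    (hflat : Module.Flat (∀ j, R j) ((Fin n → Polynomial (∀ j, R j)) ⧸ 𝔠))
    (hex : ∀ j : Fin t,
      ∃ (K L : Matrix (Fin (δ + n - k)) (Fin δ) (R j))
        (M : Matrix (Fin (δ + n - k)) (Fin n) (R j)),
        IsFOR (restrictCode 𝔠 j) K L M ∧ MinimalFOR (n := n) (k := k) K L M)
    (huniq : ∀ j : Fin t,
      ∀ (K L : Matrix (Fin (δ + n - k)) (Fin δ) (R j))
        (M : Matrix (Fin (δ + n - k)) (Fin n) (R j))
        (K' L' : Matrix (Fin (δ + n - k)) (Fin δ) (R j))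
        (M' : Matrix (Fin (δ + n - k)) (Fin n) (R j)),
        IsFOR (restrictCode 𝔠 j) K L M → MinimalFOR (n := n) (k := k) K L M →
        IsFOR (restrictCode 𝔠 j) K' L' M' → MinimalFOR (n := n) (k := k) K' L' M' →
        EquivFOR K L M K' L' M') :
    (∃ (K L : Matrix (Fin (δ + n - k)) (Fin δ) (∀ j, R j))
      (M : Matrix (Fin (δ + n - k)) (Fin n) (∀ j, R j)),
      IsFOR 𝔠 K L M ∧ MinimalFOR (n := n) (k := k) K L M) ∧
    (∀ (K L : Matrix (Fin (δ + n - k)) (Fin δ) (∀ j, R j))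
      (M : Matrix (Fin (δ + n - k)) (Fin n) (∀ j, R j))
      (K' L' : Matrix (Fin (δ + n - k)) (Fin δ) (∀ j, R j))
      (M' : Matrix (Fin (δ + n - k)) (Fin n) (∀ j, R j)),
      IsFOR 𝔠 K L M → MinimalFOR (n := n) (k := k) K L M →
      IsFOR 𝔠 K' L' M' → MinimalFOR (n := n) (k := k) K' L' M' →
      EquivFOR K L M K' L' M') := by
  classical
  constructor
  · -- existence
    choose A B Mm hFOR hMin using hex
    set K : Matrix (Fin (δ + n - k)) (Fin δ) (∀ j, R j) :=
      Matrix.of fun r c j => A j r c with hK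
    set L : Matrix (Fin (δ + n - k)) (Fin δ) (∀ j, R j) :=
      Matrix.of fun r c j => B j r c with hL
    set Mg : Matrix (Fin (δ + n - k)) (Fin n) (∀ j, R j) :=
      Matrix.of fun r c j => Mm j r c with hMg
    have hKj : ∀ j, K.map (Pi.evalRingHom R j) = A j := fun j => by ext r c; rfl
    have hLj : ∀ j, L.map (Pi.evalRingHom R j) = B j := fun j => by ext r c; rfl
    have hMj : ∀ j, Mg.map (Pi.evalRingHom R j) = Mm j := fun j => by ext r c; rfl
    refine ⟨K, L, Mg, ?_, ?_, ?_, ?_, ?_⟩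
    · exact IsFOR_up 𝔠 K L Mg (fun j => by rw [hKj, hLj, hMj]; exact hFOR j)
    · exact inj_up K (fun j => by rw [hKj]; exact (hMin j).1)
    · exact (flat_coker_iff K).mpr (fun j => by rw [hKj]; exact (hMin j).2.1)
    · refine surj_up (Matrix.fromCols K Mg) (fun j => ?_)
      have e : (Matrix.fromCols K Mg).map (Pi.evalRingHom R j)
          = Matrix.fromCols (A j) (Mm j) := by
        rw [fromColumns_map', hKj, hMj]
      rw [e]
      exact (hMin j).2.2.1
    · refine psurj_up (Matrix.fromCols
        ((Polynomial.X : Polynomial (∀ j, R j)) • K.map Polynomial.C + L.map Polynomial.C)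
        (Mg.map Polynomial.C)) (fun j => ?_)
      have e : (Matrix.fromCols
            ((Polynomial.X : Polynomial (∀ j, R j)) • K.map Polynomial.C + L.map Polynomial.C)
            (Mg.map Polynomial.C)).map (Polynomial.map (Pi.evalRingHom R j))
          = Matrix.fromCols
              ((Polynomial.X : Polynomial (R j)) • (A j).map Polynomial.C
                + (B j).map Polynomial.C) ((Mm j).map Polynomial.C) := by
        rw [fromColumns_map', polyMat_map, matC_map, hKj, hLj, hMj]
      rw [e]
      exact (hMin j).2.2.2
  · -- uniqueness
    intro K L M K' L' M' h1 h2 h1' h2'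
    apply EquivFOR_up
    intro j
    have m1 : MinimalFOR (n := n) (k := k) (K.map (Pi.evalRingHom R j))
        (L.map (Pi.evalRingHom R j)) (M.map (Pi.evalRingHom R j)) := by
      refine ⟨inj_down K h2.1 j, (flat_coker_iff K).mp h2.2.1 j, ?_, ?_⟩
      · have := surj_down (Matrix.fromCols K M) h2.2.2.1 j
        rwa [fromColumns_map'] at this
      · have := psurj_down (Matrix.fromCols
          ((Polynomial.X : Polynomial (∀ j, R j)) • K.map Polynomial.C + L.map Polynomial.C)
          (M.map Polynomial.C)) h2.2.2.2 j
        rwa [fromColumns_map', polyMat_map, matC_map] at this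
    have m1' : MinimalFOR (n := n) (k := k) (K'.map (Pi.evalRingHom R j))
        (L'.map (Pi.evalRingHom R j)) (M'.map (Pi.evalRingHom R j)) := by
      refine ⟨inj_down K' h2'.1 j, (flat_coker_iff K').mp h2'.2.1 j, ?_, ?_⟩
      · have := surj_down (Matrix.fromCols K' M') h2'.2.2.1 j
        rwa [fromColumns_map'] at this
      · have := psurj_down (Matrix.fromCols
          ((Polynomial.X : Polynomial (∀ j, R j)) • K'.map Polynomial.C + L'.map Polynomial.C)
          (M'.map Polynomial.C)) h2'.2.2.2 j
        rwa [fromColumns_map', polyMat_map, matC_map] at this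
    exact huniq j _ _ _ _ _ _ (IsFOR_down 𝔠 K L M h1 j) m1 (IsFOR_down 𝔠 K' L' M' h1' j) m1'
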